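/- Let ν ≥ 2 and let Ψ be a set of coverings with #Ψ ≥ 2. If the RVB polynomial F_Ψ = Σ_{ψ∈Ψ} F_ψ splits across a nontrivial bipartition (E,E') of Γ_{2ν}, then ψ(E∩A) = E∩B for every ψ ∈ Ψ (that is, Ψ is decomposable via E), and #E and #E' are both even. -/

import Mathlib

open MvPolynomial Finset

noncomputable section

/-- The odd-labelled site `2t−1` of the paper (`t`-th site of sublattice `A`),
zero-indexed as `2t` in `Fin (2ν)`. -/
def siteA (ν : ℕ) (t : Fin ν) : Fin (2 * ν) := ⟨2 * t.val, by have := t.isLt; omega⟩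

/-- The even-labelled site `2t` of the paper (`t`-th site of sublattice `B`),
zero-indexed as `2t+1` in `Fin (2ν)`. -/
def siteB (ν : ℕ) (t : Fin ν) : Fin (2 * ν) := ⟨2 * t.val + 1, by have := t.isLt; omega⟩

/-- A covering is a bijection `ψ : A → B`; it is encoded by the permutation
`σ` of `Fin ν` with `ψ(siteA t) = siteB (σ t)`.  Its covering polynomial is
`F_ψ = ∏_{a∈A} (X_{ψ(a)} − X_a)`. -/
def covPoly (ν : ℕ) (σ : Equiv.Perm (Fin ν)) : MvPolynomial (Fin (2 * ν)) ℂ :=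
  ∏ t : Fin ν, (X (siteB ν (σ t)) - X (siteA ν t))

/-- `F` splits across the bipartition `(E, Eᶜ)`. -/
def SplitsAcross {n : ℕ} (F : MvPolynomial (Fin n) ℂ) (E : Finset (Fin n)) : Prop :=
  ∃ p q : MvPolynomial (Fin n) ℂ, F = p * q ∧ p.vars ⊆ E ∧ q.vars ⊆ Eᶜ

/-- `ψ(E ∩ A) = E ∩ B` for the covering `ψ` encoded by `σ`
(here `E ∩ B` is the set of odd-indexed, i.e. `B`-sublattice, elements of `E`). -/
def MapsCut (ν : ℕ) (σ : Equiv.Perm (Fin ν)) (E : Finset (Fin (2 * ν))) : Prop :=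
  ((Finset.univ.filter (fun t => siteA ν t ∈ E)).image fun t => siteB ν (σ t))
    = E.filter (fun x => x.val % 2 = 1)


/-- The (unnormalized) RVB polynomial `F_Ψ = Σ_{ψ∈Ψ} F_ψ`. -/
def rvbPoly (ν : ℕ) (Ψ : Finset (Equiv.Perm (Fin ν))) : MvPolynomial (Fin (2 * ν)) ℂ :=
  ∑ σ ∈ Ψ, covPoly ν σ

variable {ν : ℕ}

lemma siteA_injective (ν : ℕ) : Function.Injective (siteA ν) := by
  intro s t h
  have h' : (2:ℕ) * s.val = 2 * t.val := congrArg Fin.val h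
  exact Fin.ext (by omega)

lemma siteB_injective (ν : ℕ) : Function.Injective (siteB ν) := by
  intro s t h
  have h' : (2:ℕ) * s.val + 1 = 2 * t.val + 1 := congrArg Fin.val h
  exact Fin.ext (by omega)

lemma siteA_ne_siteB (s t : Fin ν) : siteA ν s ≠ siteB ν t := by
  intro h
  have h' : (2:ℕ) * s.val = 2 * t.val + 1 := congrArg Fin.val h
  omega

lemma sum_single_apply_zero {α β : Type*} [DecidableEq β] (s : Finset α) (g : α → β) (i : β)
    (h : ∀ t ∈ s, g t ≠ i) : (∑ t ∈ s, Finsupp.single (g t) (1:ℕ)) i = 0 := by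
  rw [Finset.sum_apply']
  exact Finset.sum_eq_zero fun u hu => by rw [Finsupp.single_apply, if_neg (h u hu)]

lemma degree_sum_single {α β : Type*} (s : Finset α) (g : α → β) :
    Finsupp.degree (∑ t ∈ s, Finsupp.single (g t) (1:ℕ)) = s.card := by
  classical
  simp only [Finsupp.degree_eq_weight_one, map_sum]
  have h1 : ∀ t ∈ s, Finsupp.weight (fun _ => (1:ℕ) : β → ℕ) (Finsupp.single (g t) 1) = 1 := by
    intro t _
    simp [Finsupp.weight_apply, Finsupp.sum_single_index]
  rw [Finset.sum_congr rfl h1, Finset.sum_const, smul_eq_mul, mul_one]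

lemma degree_single_one {β : Type*} (b : β) :
    Finsupp.degree (Finsupp.single b (1:ℕ)) = 1 := by
  simp [Finsupp.degree_eq_weight_one, Finsupp.weight_apply, Finsupp.sum_single_index]

lemma coeff_transversal (ν : ℕ) (τ : Equiv.Perm (Fin ν)) (s : Finset (Fin ν))
    (g : Fin ν → Fin (2*ν))
    (hg : ∀ t ∈ s, g t = siteA ν t ∨ g t = siteB ν (τ t)) :
    MvPolynomial.coeff (∑ t ∈ s, Finsupp.single (g t) 1)
      (∏ t ∈ s, ((X (siteB ν (τ t)) : MvPolynomial (Fin (2*ν)) ℂ) - X (siteA ν t)))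
    = (-1) ^ (s.filter (fun t => g t = siteA ν t)).card := by
  classical
  induction s using Finset.induction_on with
  | empty => simp
  | @insert t s' ht ih =>
    have hgt := hg t (mem_insert_self _ _)
    have hg' : ∀ u ∈ s', g u = siteA ν u ∨ g u = siteB ν (τ u) :=
      fun u hu => hg u (mem_insert_of_mem hu)
    have hDA : (∑ t' ∈ s', Finsupp.single (g t') (1:ℕ)) (siteA ν t) = 0 := by
      apply sum_single_apply_zero
      intro u hu
      rcases hg' u hu with h | h
      · rw [h]; intro hc; exact ht (siteA_injective ν hc ▸ hu)
      · rw [h]; exact (siteA_ne_siteB t (τ u)).symm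
    have hDB : (∑ t' ∈ s', Finsupp.single (g t') (1:ℕ)) (siteB ν (τ t)) = 0 := by
      apply sum_single_apply_zero
      intro u hu
      rcases hg' u hu with h | h
      · rw [h]; exact siteA_ne_siteB u (τ t)
      · rw [h]; intro hc
        exact ht (τ.injective (siteB_injective ν hc) ▸ hu)
    rw [Finset.sum_insert ht, Finset.prod_insert ht, sub_mul, coeff_sub]
    rcases hgt with hA | hB
    · have e1 : coeff (Finsupp.single (g t) 1 + ∑ t' ∈ s', Finsupp.single (g t') 1)
          ((X (siteB ν (τ t)) : MvPolynomial (Fin (2*ν)) ℂ) * ∏ t' ∈ s', (X (siteB ν (τ t')) - X (siteA ν t'))) = 0 := by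
        rw [coeff_X_mul', if_neg]
        rw [Finsupp.mem_support_iff]
        simp only [Finsupp.add_apply, ne_eq, not_not]
        rw [hDB, hA, Finsupp.single_apply, if_neg (siteA_ne_siteB t (τ t))]
        rfl
      have e2 : coeff (Finsupp.single (g t) 1 + ∑ t' ∈ s', Finsupp.single (g t') 1)
          ((X (siteA ν t) : MvPolynomial (Fin (2*ν)) ℂ) * ∏ t' ∈ s', (X (siteB ν (τ t')) - X (siteA ν t'))) =
          coeff (∑ t' ∈ s', Finsupp.single (g t') 1)
            (∏ t' ∈ s', ((X (siteB ν (τ t')) : MvPolynomial (Fin (2*ν)) ℂ) - X (siteA ν t'))) := by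
        rw [hA, coeff_X_mul]
      rw [e1, e2, ih hg', zero_sub, Finset.filter_insert, if_pos hA,
        Finset.card_insert_of_notMem (by simp [ht]), pow_succ]
      ring
    · have hne : g t ≠ siteA ν t := by rw [hB]; exact (siteA_ne_siteB t (τ t)).symm
      have e1 : coeff (Finsupp.single (g t) 1 + ∑ t' ∈ s', Finsupp.single (g t') 1)
          ((X (siteB ν (τ t)) : MvPolynomial (Fin (2*ν)) ℂ) * ∏ t' ∈ s', (X (siteB ν (τ t')) - X (siteA ν t'))) =
          coeff (∑ t' ∈ s', Finsupp.single (g t') 1)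
            (∏ t' ∈ s', ((X (siteB ν (τ t')) : MvPolynomial (Fin (2*ν)) ℂ) - X (siteA ν t'))) := by
        rw [hB, coeff_X_mul]
      have e2 : coeff (Finsupp.single (g t) 1 + ∑ t' ∈ s', Finsupp.single (g t') 1)
          ((X (siteA ν t) : MvPolynomial (Fin (2*ν)) ℂ) * ∏ t' ∈ s', (X (siteB ν (τ t')) - X (siteA ν t'))) = 0 := by
        rw [coeff_X_mul', if_neg]
        rw [Finsupp.mem_support_iff]
        simp only [Finsupp.add_apply, ne_eq, not_not]
        rw [hDA, Finsupp.single_apply, if_neg hne]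
        rfl
      rw [e1, e2, ih hg', sub_zero, Finset.filter_insert, if_neg hne]

lemma coeff_covPoly_A (ν : ℕ) (τ : Equiv.Perm (Fin ν)) :
    MvPolynomial.coeff (∑ t : Fin ν, Finsupp.single (siteA ν t) 1) (covPoly ν τ) = (-1)^ν := by
  classical
  have h := coeff_transversal ν τ Finset.univ (siteA ν) (fun t _ => Or.inl rfl)
  rw [covPoly]
  rw [h, Finset.filter_true_of_mem (fun _ _ => rfl), Finset.card_univ, Fintype.card_fin]

lemma coeff_covPoly_B (ν : ℕ) (τ : Equiv.Perm (Fin ν)) (t₀ : Fin ν) (b : Fin (2*ν))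
    (hb : b = siteB ν (τ t₀)) :
    MvPolynomial.coeff (∑ t : Fin ν, Finsupp.single (if t = t₀ then b else siteA ν t) 1)
      (covPoly ν τ) = (-1)^(ν-1) := by
  classical
  have hg : ∀ t ∈ Finset.univ, (if t = t₀ then b else siteA ν t) = siteA ν t
      ∨ (if t = t₀ then b else siteA ν t) = siteB ν (τ t) := by
    intro t _
    by_cases h : t = t₀
    · subst h; right; rw [if_pos rfl, hb]
    · left; rw [if_neg h]
  have h := coeff_transversal ν τ Finset.univ _ hg
  rw [covPoly, h]
  congr 1
  have : Finset.univ.filter (fun t => (if t = t₀ then b else siteA ν t) = siteA ν t)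
      = Finset.univ.erase t₀ := by
    ext t
    simp only [Finset.mem_filter, Finset.mem_univ, true_and, Finset.mem_erase, and_true]
    by_cases h : t = t₀
    · subst h
      simp only [if_pos rfl, hb]
      constructor
      · intro hc; exact absurd hc.symm (siteA_ne_siteB t (τ t))
      · intro hc; exact absurd rfl hc
    · simp [if_neg h, h]
  rw [this, Finset.card_erase_of_mem (Finset.mem_univ _), Finset.card_univ, Fintype.card_fin]

lemma coeff_covPoly_zero (ν : ℕ) (τ : Equiv.Perm (Fin ν)) (d : Fin (2*ν) →₀ ℕ) (t₀ : Fin ν)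
    (h1 : d (siteA ν t₀) = 0) (h2 : d (siteB ν (τ t₀)) = 0) :
    MvPolynomial.coeff d (covPoly ν τ) = 0 := by
  classical
  rw [covPoly, ← Finset.mul_prod_erase _ _ (Finset.mem_univ t₀), sub_mul, coeff_sub,
    coeff_X_mul', coeff_X_mul', if_neg, if_neg, sub_zero]
  · rw [Finsupp.mem_support_iff]; simpa using h1
  · rw [Finsupp.mem_support_iff]; simpa using h2

lemma covPoly_homog (ν : ℕ) (τ : Equiv.Perm (Fin ν)) : (covPoly ν τ).IsHomogeneous ν := by
  have h : ∀ t ∈ Finset.univ, ((X (siteB ν (τ t)) : MvPolynomial (Fin (2*ν)) ℂ)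
      - X (siteA ν t)).IsHomogeneous 1 := by
    intro t _
    rw [← mem_homogeneousSubmodule]
    exact Submodule.sub_mem _
      ((mem_homogeneousSubmodule _ _).2 (isHomogeneous_X _ _))
      ((mem_homogeneousSubmodule _ _).2 (isHomogeneous_X _ _))
  have := MvPolynomial.IsHomogeneous.prod Finset.univ _ (fun _ => 1) h
  simpa [covPoly, Finset.card_univ] using this

lemma coeff_split {n : ℕ} {p q : MvPolynomial (Fin n) ℂ} {E : Finset (Fin n)}
    (hp : p.vars ⊆ E) (hq : q.vars ⊆ Eᶜ) (d : Fin n →₀ ℕ) :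
    MvPolynomial.coeff d (p * q)
      = MvPolynomial.coeff (d.filter (· ∈ E)) p * MvPolynomial.coeff (d.filter (· ∉ E)) q := by
  classical
  have key : ∀ u v : Fin n →₀ ℕ, u + v = d → MvPolynomial.coeff u p * MvPolynomial.coeff v q ≠ 0 →
      u = d.filter (· ∈ E) ∧ v = d.filter (· ∉ E) := by
    intro u v huv hne
    have hu : MvPolynomial.coeff u p ≠ 0 := left_ne_zero_of_mul hne
    have hv : MvPolynomial.coeff v q ≠ 0 := right_ne_zero_of_mul hne
    have hu' : ∀ i, i ∉ E → u i = 0 := by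
      intro i hi
      by_contra h
      exact hi (hp ((mem_vars i).2
        ⟨u, mem_support_iff.2 hu, Finsupp.mem_support_iff.2 h⟩))
    have hv' : ∀ i, i ∈ E → v i = 0 := by
      intro i hi
      by_contra h
      have := hq ((mem_vars i).2 ⟨v, mem_support_iff.2 hv, Finsupp.mem_support_iff.2 h⟩)
      rw [Finset.mem_compl] at this
      exact this hi
    have hd : ∀ i, u i + v i = d i := fun i => by
      rw [← huv]; rfl
    constructor
    · ext i
      rw [Finsupp.filter_apply]
      by_cases hi : i ∈ E
      · rw [if_pos hi, ← hd i, hv' i hi, add_zero]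
      · rw [if_neg hi, hu' i hi]
    · ext i
      rw [Finsupp.filter_apply]
      by_cases hi : i ∈ E
      · rw [if_neg (by simpa using hi), hv' i hi]
      · rw [if_pos hi, ← hd i, hu' i hi, zero_add]
  rw [coeff_mul]
  apply Finset.sum_eq_single (d.filter (· ∈ E), d.filter (· ∉ E))
  · intro b hb hne
    by_contra h
    obtain ⟨h1, h2⟩ := key b.1 b.2 (Finset.HasAntidiagonal.mem_antidiagonal.1 hb) h
    exact hne (Prod.ext h1 h2)
  · intro h
    exfalso
    apply h
    rw [Finset.HasAntidiagonal.mem_antidiagonal]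
    exact Finsupp.filter_pos_add_filter_neg d _

lemma degree_add_aux {β : Type*} (u v : β →₀ ℕ) :
    Finsupp.degree (u + v) = Finsupp.degree u + Finsupp.degree v := by
  simp only [Finsupp.degree_eq_weight_one]
  exact map_add _ u v


/-- Theorem 3.1(ii)(b): if `F_Ψ` splits across a nontrivial
bipartition `(E,E')`, then `ψ(E∩A) = E∩B` for every `ψ ∈ Ψ` (i.e. `Ψ` is
decomposable via `E`), and `#E`, `#E'` are both even. -/
theorem stmt_7 (ν : ℕ) (hν : 2 ≤ ν) (Ψ : Finset (Equiv.Perm (Fin ν)))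
    (hΨ : 2 ≤ Ψ.card)
    (E : Finset (Fin (2 * ν))) (hE : E.Nonempty) (hE' : E ≠ Finset.univ)
    (hsplit : SplitsAcross (rvbPoly ν Ψ) E) :
    (∀ σ ∈ Ψ, MapsCut ν σ E) ∧ Even E.card ∧ Even Eᶜ.card := by
  classical
  obtain ⟨p, q, hF, hp, hq⟩ := hsplit
  have hΨne : Ψ.Nonempty := Finset.card_pos.1 (by omega)
  have hFhom : (rvbPoly ν Ψ).IsHomogeneous ν :=
    MvPolynomial.IsHomogeneous.sum _ _ _ (fun τ _ => covPoly_homog ν τ)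
  -- the key dimer-noncrossing property
  have key : ∀ σ ∈ Ψ, ∀ t₀ : Fin ν, (siteA ν t₀ ∈ E ↔ siteB ν (σ t₀) ∈ E) := by
    intro σ hσ t₀
    by_contra hc
    set a := siteA ν t₀ with ha_def
    set b := siteB ν (σ t₀) with hb_def
    set D : Fin (2*ν) →₀ ℕ := ∑ t ∈ Finset.univ.erase t₀, Finsupp.single (siteA ν t) 1 with hD
    set dA : Fin (2*ν) →₀ ℕ := ∑ t : Fin ν, Finsupp.single (siteA ν t) 1 with hdA_def
    have hdA : dA = Finsupp.single a 1 + D := by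
      rw [hdA_def, hD, ← Finset.add_sum_erase _ _ (Finset.mem_univ t₀)]
    set d2 : Fin (2*ν) →₀ ℕ :=
      ∑ t : Fin ν, Finsupp.single (if t = t₀ then b else siteA ν t) 1 with hd2_def
    have hd2 : d2 = Finsupp.single b 1 + D := by
      rw [hd2_def, ← Finset.add_sum_erase _ _ (Finset.mem_univ t₀), if_pos rfl, hD]
      congr 1
      exact Finset.sum_congr rfl fun u hu => by rw [if_neg (Finset.mem_erase.1 hu).1]
    set m : Fin (2*ν) →₀ ℕ := dA + Finsupp.single b 1 with hm
    have hDa : D a = 0 := by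
      apply sum_single_apply_zero
      intro u hu hc'
      exact (Finset.mem_erase.1 hu).1 (siteA_injective ν hc')
    have hDodd : ∀ i : Fin (2*ν), i.val % 2 = 1 → D i = 0 := by
      intro i hi
      apply sum_single_apply_zero
      intro u _ hc'
      have h2 : (2:ℕ) * u.val = i.val := congrArg Fin.val hc'
      omega
    have hab : a ≠ b := siteA_ne_siteB _ _
    have hbodd : b.val % 2 = 1 := by
      show (2 * (σ t₀).val + 1) % 2 = 1
      omega
    -- nonvanishing coefficients of the rvb polynomial
    have cA : MvPolynomial.coeff dA (rvbPoly ν Ψ) ≠ 0 := by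
      rw [rvbPoly, MvPolynomial.coeff_sum,
        Finset.sum_congr rfl (fun τ _ => coeff_covPoly_A ν τ), Finset.sum_const,
        nsmul_eq_mul]
      exact mul_ne_zero (Nat.cast_ne_zero.2 (by omega)) (pow_ne_zero _ (by norm_num))
    have c2 : MvPolynomial.coeff d2 (rvbPoly ν Ψ) ≠ 0 := by
      rw [rvbPoly, MvPolynomial.coeff_sum]
      have step : ∀ τ ∈ Ψ, MvPolynomial.coeff d2 (covPoly ν τ)
          = if τ t₀ = σ t₀ then ((-1:ℂ))^(ν-1) else 0 := by
        intro τ _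
        by_cases h : τ t₀ = σ t₀
        · rw [if_pos h, hd2_def, coeff_covPoly_B ν τ t₀ b (by rw [hb_def, h])]
        · rw [if_neg h]
          apply coeff_covPoly_zero ν τ d2 t₀
          · rw [hd2, Finsupp.add_apply, hDa,
              Finsupp.single_apply, if_neg (fun hh => hab hh.symm)]
          · have hBne : b ≠ siteB ν (τ t₀) := by
              intro hh
              exact h (siteB_injective ν hh.symm ▸ rfl)
            have hDB : D (siteB ν (τ t₀)) = 0 := hDodd _ (by show (2*(τ t₀).val+1) % 2 = 1; omega)
            rw [hd2, Finsupp.add_apply, hDB, Finsupp.single_apply, if_neg hBne]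
      rw [Finset.sum_congr rfl step, Finset.sum_ite, Finset.sum_const, Finset.sum_const_zero,
        add_zero, nsmul_eq_mul]
      refine mul_ne_zero (Nat.cast_ne_zero.2 ?_) (pow_ne_zero _ (by norm_num))
      exact Finset.card_ne_zero_of_mem (Finset.mem_filter.2 ⟨hσ, rfl⟩)
    -- split coefficients
    have sA := coeff_split hp hq dA; rw [← hF] at sA
    have s2 := coeff_split hp hq d2; rw [← hF] at s2
    have sm := coeff_split hp hq m; rw [← hF] at sm
    have pA : MvPolynomial.coeff (dA.filter (· ∈ E)) p ≠ 0 :=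
      left_ne_zero_of_mul (sA ▸ cA)
    have qA : MvPolynomial.coeff (dA.filter (· ∉ E)) q ≠ 0 :=
      right_ne_zero_of_mul (sA ▸ cA)
    have p2 : MvPolynomial.coeff (d2.filter (· ∈ E)) p ≠ 0 :=
      left_ne_zero_of_mul (s2 ▸ c2)
    have q2 : MvPolynomial.coeff (d2.filter (· ∉ E)) q ≠ 0 :=
      right_ne_zero_of_mul (s2 ▸ c2)
    -- the mixed monomial has degree ν + 1, hence zero coefficient
    have hdegm : Finsupp.degree m = ν + 1 := by
      rw [hm, degree_add_aux, hdA_def, degree_sum_single, degree_single_one,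
        Finset.card_univ, Fintype.card_fin]
    have cm : MvPolynomial.coeff m (rvbPoly ν Ψ) = 0 :=
      hFhom.coeff_eq_zero (by rw [hdegm]; omega)
    rw [cm] at sm
    by_cases haE : a ∈ E
    · have hbE : b ∉ E := fun h => hc ⟨fun _ => h, fun _ => haE⟩
      have hmE : m.filter (· ∈ E) = dA.filter (· ∈ E) := by
        ext i
        rw [Finsupp.filter_apply, Finsupp.filter_apply]
        by_cases hi : i ∈ E
        · rw [if_pos hi, if_pos hi, hm, Finsupp.add_apply,
            Finsupp.single_apply, if_neg (fun h : b = i => hbE (h ▸ hi)), add_zero]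
        · rw [if_neg hi, if_neg hi]
      have hmE' : m.filter (· ∉ E) = d2.filter (· ∉ E) := by
        ext i
        rw [Finsupp.filter_apply, Finsupp.filter_apply]
        by_cases hi : i ∈ E
        · rw [if_neg (show ¬ i ∉ E from fun h => h hi), if_neg (show ¬ i ∉ E from fun h => h hi)]
        · rw [if_pos hi, if_pos hi, hm, hdA, hd2]
          simp only [Finsupp.add_apply]
          rw [Finsupp.single_apply (a := a), if_neg (fun h : a = i => hi (h ▸ haE))]
          ring
      rw [hmE, hmE'] at sm
      exact (mul_ne_zero pA q2) sm.symm
    · have hbE : b ∈ E := by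
        by_contra hbE
        exact hc (iff_of_false haE hbE)
      have hmE : m.filter (· ∈ E) = d2.filter (· ∈ E) := by
        ext i
        rw [Finsupp.filter_apply, Finsupp.filter_apply]
        by_cases hi : i ∈ E
        · rw [if_pos hi, if_pos hi, hm, hdA, hd2]
          simp only [Finsupp.add_apply]
          rw [Finsupp.single_apply (a := a), if_neg (fun h : a = i => haE (h ▸ hi))]
          ring
        · rw [if_neg hi, if_neg hi]
      have hmE' : m.filter (· ∉ E) = dA.filter (· ∉ E) := by
        ext i
        rw [Finsupp.filter_apply, Finsupp.filter_apply]
        by_cases hi : i ∈ E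
        · rw [if_neg (show ¬ i ∉ E from fun h => h hi), if_neg (show ¬ i ∉ E from fun h => h hi)]
        · rw [if_pos hi, if_pos hi, hm, Finsupp.add_apply,
            Finsupp.single_apply, if_neg (fun h : b = i => hi (h ▸ hbE)), add_zero]
      rw [hmE, hmE'] at sm
      exact (mul_ne_zero p2 qA) sm.symm
  -- from the key property to MapsCut
  have hmc : ∀ σ ∈ Ψ, MapsCut ν σ E := by
    intro σ hσ
    show _ = _
    ext x
    simp only [Finset.mem_image, Finset.mem_filter, Finset.mem_univ, true_and]
    constructor
    · rintro ⟨t, ht, rfl⟩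
      refine ⟨(key σ hσ t).1 ht, ?_⟩
      show (2 * (σ t).val + 1) % 2 = 1
      omega
    · rintro ⟨hxE, hx⟩
      have hlt : x.val < 2 * ν := x.isLt
      have hu : x.val / 2 < ν := by omega
      have hBu : siteB ν ⟨x.val / 2, hu⟩ = x :=
        Fin.ext (by show 2 * (x.val / 2) + 1 = x.val; omega)
      refine ⟨σ.symm ⟨x.val / 2, hu⟩, ?_, ?_⟩
      · apply (key σ hσ _).2
        rw [Equiv.apply_symm_apply, hBu]
        exact hxE
      · rw [Equiv.apply_symm_apply, hBu]
  refine ⟨hmc, ?_, ?_⟩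
  all_goals {
    obtain ⟨σ₀, hσ₀⟩ := hΨne
    have h1 : (E.filter (fun x => x.val % 2 = 1)).card
        = (Finset.univ.filter (fun t => siteA ν t ∈ E)).card := by
      rw [← hmc σ₀ hσ₀]
      exact Finset.card_image_of_injective _
        (fun s t h => σ₀.injective (siteB_injective ν h))
    have h2 : (E.filter (fun x => ¬ x.val % 2 = 1)).card
        = (Finset.univ.filter (fun t => siteA ν t ∈ E)).card := by
      have himg : E.filter (fun x => ¬ x.val % 2 = 1)
          = (Finset.univ.filter (fun t => siteA ν t ∈ E)).image (siteA ν) := by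
        ext x
        simp only [Finset.mem_filter, Finset.mem_image, Finset.mem_univ, true_and]
        constructor
        · rintro ⟨hxE, hx⟩
          have hlt : x.val < 2 * ν := x.isLt
          have hu : x.val / 2 < ν := by omega
          have hAu : siteA ν ⟨x.val / 2, hu⟩ = x :=
            Fin.ext (by show 2 * (x.val / 2) = x.val; omega)
          exact ⟨⟨x.val / 2, hu⟩, by rw [hAu]; exact hxE, hAu⟩
        · rintro ⟨t, htE, rfl⟩
          exact ⟨htE, by show ¬ (2 * t.val) % 2 = 1; omega⟩
      rw [himg, Finset.card_image_of_injective _ (siteA_injective ν)]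
    have hsum := Finset.card_filter_add_card_filter_not
      (s := E) (p := fun x => x.val % 2 = 1)
    have hEcard : E.card = 2 * (Finset.univ.filter (fun t => siteA ν t ∈ E)).card := by
      omega
    have hcompl : Eᶜ.card = 2 * ν - E.card := by
      rw [Finset.card_compl, Fintype.card_fin]
    have hle : E.card ≤ 2 * ν := by
      simpa using Finset.card_le_univ E
    first
      | exact ⟨(Finset.univ.filter (fun t => siteA ν t ∈ E)).card, by omega⟩
      | exact ⟨ν - (Finset.univ.filter (fun t => siteA ν t ∈ E)).card, by omega⟩
  }
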